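/- Let C be a d-uniform clutter on vertex set X whose set covering polyhedron Q(A) is integral. Then there exist d mutually disjoint minimal vertex covers X_1,...,X_d of C such that X = X_1 ∪ ... ∪ X_d. In particular every edge of C meets each X_k in exactly one vertex. -/

import Mathlib

open Finset

/-- A clutter on vertex set `Fin n`: a family of nonempty edges, none contained in another. -/
structure Clutter (n : ℕ) where
  edges : Finset (Finset (Fin n))
  nonempty_edges : ∀ e ∈ edges, e.Nonempty
  antichain : ∀ e ∈ edges, ∀ f ∈ edges, e ⊆ f → e = f

namespace Clutter

variable {n : ℕ}

/-- `C` is `d`-uniform: every edge has exactly `d` vertices. -/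
def Uniform (C : Clutter n) (d : ℕ) : Prop := ∀ e ∈ C.edges, e.card = d

/-- `S` is a vertex cover of `C`. -/
def IsCover (C : Clutter n) (S : Finset (Fin n)) : Prop := ∀ e ∈ C.edges, (e ∩ S).Nonempty

/-- `S` is a minimal vertex cover of `C`. -/
def IsMinCover (C : Clutter n) (S : Finset (Fin n)) : Prop :=
  C.IsCover S ∧ ∀ T ⊆ S, C.IsCover T → T = S

/-- The vertex covering number `α₀(C)`. -/
noncomputable def coverNumber (C : Clutter n) : ℕ :=
  sInf {k | ∃ S : Finset (Fin n), C.IsCover S ∧ S.card = k}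

/-- The edge independence (matching) number `β₁(C)`. -/
noncomputable def matchNumber (C : Clutter n) : ℕ :=
  sSup {k | ∃ M : Finset (Finset (Fin n)), M ⊆ C.edges ∧
    (∀ e ∈ M, ∀ f ∈ M, e ≠ f → Disjoint e f) ∧ M.card = k}

/-- `C` has a perfect matching: pairwise disjoint edges covering all vertices. -/
def HasPerfectMatching (C : Clutter n) : Prop :=
  ∃ M : Finset (Finset (Fin n)), M ⊆ C.edges ∧
    (∀ e ∈ M, ∀ f ∈ M, e ≠ f → Disjoint e f) ∧ (∀ i : Fin n, ∃ e ∈ M, i ∈ e)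

/-- The set covering polyhedron `Q(A) = {x : x ≥ 0, xA ≥ 1}`. -/
def QA (C : Clutter n) : Set (Fin n → ℝ) :=
  {x | (∀ i, 0 ≤ x i) ∧ ∀ e ∈ C.edges, 1 ≤ ∑ i ∈ e, x i}

/-- `Q(A)` is an integral polyhedron: all its vertices (extreme points) are integral. -/
def QAIntegral (C : Clutter n) : Prop :=
  ∀ x ∈ Set.extremePoints ℝ C.QA, ∀ i, ∃ z : ℤ, x i = (z : ℝ)

/-- Deletion of a vertex: remove `v` and all edges through it. -/
def delete (C : Clutter n) (v : Fin n) : Clutter n where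
  edges := C.edges.filter (fun e => v ∉ e)
  nonempty_edges := fun e he => C.nonempty_edges e (mem_filter.mp he).1
  antichain := fun e he f hf hef =>
    C.antichain e (mem_filter.mp he).1 f (mem_filter.mp hf).1 hef

/-- The edges of the minor of `C` obtained by deleting the vertices in `D`
(setting them to `0`) and contracting the vertices in `U` (setting them to `1`):
the minimal nonempty sets of the form `e \ U` with `e` an edge disjoint from `D`. -/
def minorEdges (C : Clutter n) (D U : Finset (Fin n)) : Finset (Finset (Fin n)) :=
  ((C.edges.filter (fun e => Disjoint e D)).image (fun e => e \ U)).filter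
    (fun e => e.Nonempty ∧
      ∀ f ∈ (C.edges.filter (fun e => Disjoint e D)).image (fun e => e \ U),
        f.Nonempty → f ⊆ e → f = e)

/-- The minor of `C` determined by deleting `D` and contracting `U`. -/
def minor (C : Clutter n) (D U : Finset (Fin n)) : Clutter n where
  edges := C.minorEdges D U
  nonempty_edges := fun e he => ((mem_filter.mp he).2).1
  antichain := fun e he f hf hef =>
    ((mem_filter.mp hf).2).2 e (mem_filter.mp he).1 ((mem_filter.mp he).2).1 hef

/-- The König property: `α₀(C) = β₁(C)`. -/
def HasKonig (C : Clutter n) : Prop := C.coverNumber = C.matchNumber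

/-- The packing property: every (proper) minor of `C` has the König property. -/
def PackingProperty (C : Clutter n) : Prop :=
  ∀ D U : Finset (Fin n), Disjoint D U →
    (∀ e ∈ C.edges, Disjoint e D → ¬ e ⊆ U) → (C.minor D U).HasKonig

/-- The max-flow min-cut property: for every nonnegative integral `α` the LP
`min{⟨α,x⟩ : x ≥ 0, xA ≥ 1}` and its dual `max{⟨y,1⟩ : y ≥ 0, Ay ≤ α}` both have
integral optimum solutions (expressed via a pair of integral feasible solutions
with equal objective values, which are then optimal by LP duality). -/
def HasMFMC (C : Clutter n) : Prop :=
  ∀ α : Fin n → ℕ,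
    ∃ (x : Fin n → ℕ) (y : Finset (Fin n) → ℕ),
      (∀ e ∈ C.edges, 1 ≤ ∑ i ∈ e, x i) ∧
      (∀ e, e ∉ C.edges → y e = 0) ∧
      (∀ i : Fin n, ∑ e ∈ C.edges.filter (fun e => i ∈ e), y e ≤ α i) ∧
      (∑ i, α i * x i = ∑ e ∈ C.edges, y e)

/-- The incidence matrix of `C`, with columns indexed by the edges. -/
def inc (C : Clutter n) : Matrix (Fin n) {e // e ∈ C.edges} ℤ :=
  Matrix.of fun i e => if i ∈ e.1 then 1 else 0

end Clutter

/-- `Δ_r(A) = 1`: the gcd of all nonzero `r × r` subdeterminants of `A` is `1`,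
i.e. every common divisor of them is a unit. -/
def DeltaOne {m m' : Type*} [Fintype m] [Fintype m'] (A : Matrix m m' ℤ) (r : ℕ) : Prop :=
  ∀ k : ℤ, (∀ (f : Fin r → m) (g : Fin r → m'), Function.Injective f → Function.Injective g →
    (A.submatrix f g).det ≠ 0 → k ∣ (A.submatrix f g).det) → IsUnit k



section Aux

open scoped Classical

namespace ClutterAux

variable {n : ℕ}

/-- The support of a clutter: vertices belonging to some edge. -/
def supp (C : Clutter n) : Finset (Fin n) := C.edges.biUnion id

lemma mem_supp {C : Clutter n} {i : Fin n} : i ∈ supp C ↔ ∃ e ∈ C.edges, i ∈ e := by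
  simp [supp]

lemma convex_zero {a b y z : ℝ} (ha : 0 < a) (hb : 0 < b) (hy : 0 ≤ y) (hz : 0 ≤ z)
    (h : a * y + b * z = 0) : y = 0 ∧ z = 0 := by
  constructor <;> nlinarith

lemma convex_one {a b sy sz : ℝ} (ha : 0 < a) (hb : 0 < b) (hab : a + b = 1)
    (hy : 1 ≤ sy) (hz : 1 ≤ sz) (h : a * sy + b * sz = 1) : sy = 1 ∧ sz = 1 := by
  constructor <;> nlinarith

lemma sum_split (e S : Finset (Fin n)) (f : Fin n → ℝ) :
    ∑ j ∈ e, f j = ∑ j ∈ e \ S, f j + ∑ j ∈ e ∩ S, f j := by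
  rw [← Finset.sdiff_inter_self_left e S]
  exact (Finset.sum_sdiff Finset.inter_subset_left).symm

/-- An extreme point of `Q(A)` vanishes outside the support. -/
lemma extreme_zero_outside {C : Clutter n} {x : Fin n → ℝ}
    (hx : x ∈ Set.extremePoints ℝ C.QA) {i : Fin n} (hi : i ∉ supp C) : x i = 0 := by
  obtain ⟨⟨hx0, hxe⟩, hext⟩ := hx
  by_contra h
  have hpos : 0 < x i := lt_of_le_of_ne (hx0 i) (Ne.symm h)
  have hie : ∀ e ∈ C.edges, i ∉ e := by
    intro e he hie
    exact hi (mem_supp.mpr ⟨e, he, hie⟩)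
  have hupd : ∀ (c : ℝ) (e : Finset (Fin n)), e ∈ C.edges →
      ∑ j ∈ e, Function.update x i c j = ∑ j ∈ e, x j := by
    intro c e he
    refine Finset.sum_congr rfl fun j hj => ?_
    have hji : j ≠ i := by
      rintro rfl
      exact hie e he hj
    exact Function.update_of_ne hji c x
  have hmemQ : ∀ c : ℝ, 0 ≤ c → Function.update x i c ∈ C.QA := by
    intro c hc
    refine ⟨fun j => ?_, fun e he => ?_⟩
    · rcases eq_or_ne j i with rfl | hji
      · simpa using hc
      · rw [Function.update_of_ne hji]; exact hx0 j
    · rw [hupd c e he]; exact hxe e he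
  have hy := hmemQ 0 le_rfl
  have hz := hmemQ (2 * x i) (by linarith)
  have hseg : x ∈ openSegment ℝ (Function.update x i 0) (Function.update x i (2 * x i)) := by
    refine ⟨1/2, 1/2, by norm_num, by norm_num, by norm_num, ?_⟩
    funext j
    rcases eq_or_ne j i with rfl | hji
    · simp only [Pi.add_apply, Pi.smul_apply, smul_eq_mul, Function.update_self]
      ring
    · simp only [Pi.add_apply, Pi.smul_apply, smul_eq_mul, Function.update_of_ne hji]
      ring
  have := (hext hy hz hseg)
  have := congrFun this i
  rw [Function.update_self] at this
  exact h this.symm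

/-- The tight face of `Q(A)`. -/
def Fface (C : Clutter n) : Set (Fin n → ℝ) :=
  {x | (∀ i, 0 ≤ x i) ∧ (∀ i, i ∉ supp C → x i = 0) ∧ ∀ e ∈ C.edges, ∑ i ∈ e, x i = 1}

lemma Fface_le_one {C : Clutter n} {x : Fin n → ℝ} (hx : x ∈ Fface C) (i : Fin n) :
    x i ≤ 1 := by
  obtain ⟨h0, hz, hs⟩ := hx
  by_cases hi : i ∈ supp C
  · obtain ⟨e, he, hie⟩ := mem_supp.mp hi
    calc x i ≤ ∑ j ∈ e, x j := Finset.single_le_sum (fun j _ => h0 j) hie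
      _ = 1 := hs e he
  · rw [hz i hi]; norm_num

lemma Fface_extreme_subset {C : Clutter n} {x : Fin n → ℝ}
    (hx : x ∈ Set.extremePoints ℝ (Fface C)) : x ∈ Set.extremePoints ℝ C.QA := by
  obtain ⟨⟨h0, hzero, hs⟩, hext⟩ := hx
  refine ⟨⟨h0, fun e he => le_of_eq (hs e he).symm⟩, ?_⟩
  intro y hy z hz hseg
  obtain ⟨a, b, ha, hb, hab, habx⟩ := hseg
  have hpt : ∀ j, a * y j + b * z j = x j := by
    intro j
    have := congrFun habx j
    simpa using this
  have hyz0 : ∀ j, j ∉ supp C → y j = 0 ∧ z j = 0 := by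
    intro j hj
    exact convex_zero ha hb (hy.1 j) (hz.1 j) (by rw [hpt j, hzero j hj])
  have hsum : ∀ e ∈ C.edges, (∑ j ∈ e, y j) = 1 ∧ (∑ j ∈ e, z j) = 1 := by
    intro e he
    refine convex_one ha hb hab (hy.2 e he) (hz.2 e he) ?_
    have : ∑ j ∈ e, (a * y j + b * z j) = ∑ j ∈ e, x j :=
      Finset.sum_congr rfl fun j _ => hpt j
    rw [Finset.sum_add_distrib, ← Finset.mul_sum, ← Finset.mul_sum] at this
    rw [this, hs e he]
  have hyF : y ∈ Fface C := ⟨hy.1, fun j hj => (hyz0 j hj).1, fun e he => (hsum e he).1⟩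
  have hzF : z ∈ Fface C := ⟨hz.1, fun j hj => (hyz0 j hj).2, fun e he => (hsum e he).2⟩
  exact hext hyF hzF ⟨a, b, ha, hb, hab, habx⟩

lemma Fface_convex (C : Clutter n) : Convex ℝ (Fface C) := by
  intro x hx y hy a b ha hb hab
  refine ⟨fun i => ?_, fun i hi => ?_, fun e he => ?_⟩
  · have : (a • x + b • y) i = a * x i + b * y i := by simp
    rw [this]
    exact add_nonneg (mul_nonneg ha (hx.1 i)) (mul_nonneg hb (hy.1 i))
  · have : (a • x + b • y) i = a * x i + b * y i := by simp
    rw [this, hx.2.1 i hi, hy.2.1 i hi]; ring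
  · have : ∀ j, (a • x + b • y) j = a * x j + b * y j := fun j => by simp
    calc ∑ j ∈ e, (a • x + b • y) j = ∑ j ∈ e, (a * x j + b * y j) :=
          Finset.sum_congr rfl fun j _ => this j
      _ = a * ∑ j ∈ e, x j + b * ∑ j ∈ e, y j := by
          rw [Finset.sum_add_distrib, Finset.mul_sum, Finset.mul_sum]
      _ = 1 := by rw [hx.2.2 e he, hy.2.2 e he]; simpa using hab

lemma Fface_isClosed (C : Clutter n) : IsClosed (Fface C) := by
  have h1 : IsClosed {x : Fin n → ℝ | ∀ i, 0 ≤ x i} := by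
    have : {x : Fin n → ℝ | ∀ i, 0 ≤ x i} = ⋂ i, {x : Fin n → ℝ | 0 ≤ x i} := by
      ext x; simp [Set.mem_iInter]
    rw [this]
    exact isClosed_iInter fun i => isClosed_le continuous_const (continuous_apply i)
  have h2 : IsClosed {x : Fin n → ℝ | ∀ i, i ∉ supp C → x i = 0} := by
    have : {x : Fin n → ℝ | ∀ i, i ∉ supp C → x i = 0} =
        ⋂ i ∈ {i : Fin n | i ∉ supp C}, {x : Fin n → ℝ | x i = 0} := by
      ext x; simp [Set.mem_iInter]
    rw [this]
    exact isClosed_biInter fun i _ => isClosed_eq (continuous_apply i) continuous_const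
  have h3 : IsClosed {x : Fin n → ℝ | ∀ e ∈ C.edges, ∑ i ∈ e, x i = 1} := by
    have : {x : Fin n → ℝ | ∀ e ∈ C.edges, ∑ i ∈ e, x i = 1} =
        ⋂ e ∈ C.edges, {x : Fin n → ℝ | ∑ i ∈ e, x i = 1} := by
      ext x; simp [Set.mem_iInter]
    rw [this]
    refine isClosed_biInter fun e _ => isClosed_eq ?_ continuous_const
    exact continuous_finset_sum e fun i _ => continuous_apply i
  have : Fface C = {x : Fin n → ℝ | ∀ i, 0 ≤ x i} ∩
      ({x | ∀ i, i ∉ supp C → x i = 0} ∩ {x | ∀ e ∈ C.edges, ∑ i ∈ e, x i = 1}) := by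
    ext x
    simp only [Fface, Set.mem_setOf_eq, Set.mem_inter_iff]
  rw [this]
  exact h1.inter (h2.inter h3)

lemma Fface_isCompact (C : Clutter n) : IsCompact (Fface C) := by
  refine (isCompact_closedBall (0 : Fin n → ℝ) 1).of_isClosed_subset (Fface_isClosed C) ?_
  intro x hx
  rw [Metric.mem_closedBall, dist_zero_right]
  rw [pi_norm_le_iff_of_nonneg (by norm_num : (0:ℝ) ≤ 1)]
  intro i
  rw [Real.norm_eq_abs, abs_le]
  exact ⟨by linarith [hx.1 i], Fface_le_one hx i⟩

/-- From integrality of `Q(A)` deduce a set meeting every edge exactly once. -/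
lemma exists_transversal {d : ℕ} (C : Clutter n) (hC : C.Uniform d) (hd : 0 < d)
    (hQ : C.QAIntegral) :
    ∃ S : Finset (Fin n), S ⊆ supp C ∧ ∀ e ∈ C.edges, (e ∩ S).card = 1 := by
  have hdR : ((d : ℝ)) ≠ 0 := Nat.cast_ne_zero.mpr hd.ne'
  -- the fractional point
  have huF : (fun i => if i ∈ supp C then ((d : ℝ))⁻¹ else 0) ∈ Fface C := by
    refine ⟨fun i => ?_, fun i hi => by simp [hi], fun e he => ?_⟩
    · by_cases hi : i ∈ supp C <;> simp [hi]
    · have : ∀ i ∈ e, (if i ∈ supp C then ((d : ℝ))⁻¹ else 0) = ((d : ℝ))⁻¹ := by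
        intro i hi
        rw [if_pos (mem_supp.mpr ⟨e, he, hi⟩)]
      rw [Finset.sum_congr rfl this, Finset.sum_const, hC e he, nsmul_eq_mul]
      exact mul_inv_cancel₀ hdR
  obtain ⟨x, hx⟩ := (Fface_isCompact C).extremePoints_nonempty ⟨_, huF⟩
  have hxQ : x ∈ Set.extremePoints ℝ C.QA := Fface_extreme_subset hx
  have hx01 : ∀ i, x i = 0 ∨ x i = 1 := by
    intro i
    obtain ⟨z, hz⟩ := hQ x hxQ i
    have h0 : (0:ℝ) ≤ (z:ℝ) := hz ▸ hx.1.1 i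
    have h1 : ((z:ℝ)) ≤ 1 := hz ▸ Fface_le_one hx.1 i
    have h0' : (0:ℤ) ≤ z := by exact_mod_cast h0
    have h1' : z ≤ 1 := by exact_mod_cast h1
    interval_cases z
    · left; simp [hz]
    · right; simp [hz]
  refine ⟨Finset.univ.filter (fun i => x i = 1), ?_, ?_⟩
  · intro i hi
    rw [Finset.mem_filter] at hi
    by_contra hsup
    rw [hx.1.2.1 i hsup] at hi
    norm_num at hi
  · intro e he
    have hsum := hx.1.2.2 e he
    have : ∑ i ∈ e, x i =
        ((e ∩ Finset.univ.filter (fun i => x i = 1)).card : ℝ) := by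
      rw [sum_split e (Finset.univ.filter (fun i => x i = 1)) x]
      have hz : ∑ j ∈ e \ Finset.univ.filter (fun i => x i = 1), x j = 0 := by
        refine Finset.sum_eq_zero fun j hj => ?_
        rw [Finset.mem_sdiff, Finset.mem_filter] at hj
        rcases hx01 j with h | h
        · exact h
        · exact absurd ⟨Finset.mem_univ j, h⟩ hj.2
      have ho : ∑ j ∈ e ∩ Finset.univ.filter (fun i => x i = 1), x j =
          ((e ∩ Finset.univ.filter (fun i => x i = 1)).card : ℝ) := by
        rw [Finset.sum_congr rfl (fun j hj => (Finset.mem_filter.mp (Finset.mem_inter.mp hj).2).2),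
          Finset.sum_const, nsmul_eq_mul, mul_one]
      rw [hz, ho, zero_add]
    rw [this] at hsum
    exact_mod_cast hsum

/-- Key inductive lemma. -/
lemma key : ∀ (d : ℕ) (C : Clutter n), C.Uniform d → C.QAIntegral →
    ∃ X : Fin d → Finset (Fin n),
      (∀ i j, i ≠ j → Disjoint (X i) (X j)) ∧
      (∀ e ∈ C.edges, ∀ i, (e ∩ X i).card = 1) ∧
      (∀ i, X i ⊆ supp C) ∧
      (∀ v ∈ supp C, ∃ i, v ∈ X i) := by
  intro d
  induction d with
  | zero =>
    intro C hC _
    have hE : C.edges = ∅ := by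
      rw [Finset.eq_empty_iff_forall_notMem]
      intro e he
      exact (C.nonempty_edges e he).ne_empty (Finset.card_eq_zero.mp (hC e he))
    refine ⟨Fin.elim0, fun i => i.elim0, fun e he => by rw [hE] at he; simp at he,
      fun i => i.elim0, fun v hv => ?_⟩
    obtain ⟨e, he, _⟩ := mem_supp.mp hv
    rw [hE] at he; simp at he
  | succ d ih =>
    intro C hC hQ
    obtain ⟨S, hSsupp, hScard⟩ := exists_transversal C hC (Nat.succ_pos d) hQ
    set E' : Finset (Finset (Fin n)) := (C.edges.image (· \ S)).filter Finset.Nonempty with hE'def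
    have hmemE' : ∀ f, f ∈ E' ↔ (∃ e ∈ C.edges, e \ S = f) ∧ f.Nonempty := by
      intro f
      simp [hE'def, Finset.mem_filter, Finset.mem_image]
    have hcardE' : ∀ f ∈ E', f.card = d := by
      intro f hf
      obtain ⟨⟨e, he, rfl⟩, _⟩ := (hmemE' f).mp hf
      have h1 := hScard e he
      have h2 := hC e he
      have h3 := Finset.card_sdiff_add_card_inter e S
      omega
    set C' : Clutter n := ⟨E', fun f hf => (Finset.mem_filter.mp hf).2,
      fun f hf g hg hfg => Finset.eq_of_subset_of_card_le hfg
        (by rw [hcardE' f hf, hcardE' g hg])⟩ with hC'def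
    have hC'edges : C'.edges = E' := rfl
    have hsupp' : supp C' = supp C \ S := by
      ext v
      simp only [mem_supp, Finset.mem_sdiff, hC'edges]
      constructor
      · rintro ⟨f, hf, hvf⟩
        obtain ⟨⟨e, he, rfl⟩, _⟩ := (hmemE' f).mp hf
        rw [Finset.mem_sdiff] at hvf
        exact ⟨⟨e, he, hvf.1⟩, hvf.2⟩
      · rintro ⟨⟨e, he, hve⟩, hvS⟩
        exact ⟨e \ S, (hmemE' _).mpr ⟨⟨e, he, rfl⟩, ⟨v, Finset.mem_sdiff.mpr ⟨hve, hvS⟩⟩⟩,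
          Finset.mem_sdiff.mpr ⟨hve, hvS⟩⟩
    have hC'unif : C'.Uniform d := fun f hf => hcardE' f hf
    have hQ' : C'.QAIntegral := by
      intro x hx i
      have hzero : ∀ j, j ∉ supp C' → x j = 0 := fun j hj => extreme_zero_outside hx hj
      by_cases hE'0 : E' = ∅
      · refine ⟨0, ?_⟩
        rw [hzero i ?_]
        · norm_num
        · rw [mem_supp]
          rintro ⟨e, he, -⟩
          rw [hC'edges, hE'0] at he
          simp at he
      · have hd1 : 1 ≤ d := by
          obtain ⟨f, hf⟩ := Finset.nonempty_iff_ne_empty.mpr hE'0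
          have h1 := hcardE' f hf
          have h2 := ((hmemE' f).mp hf).2
          have := Finset.card_pos.mpr h2
          omega
        have hmem : ∀ e ∈ C.edges, e \ S ∈ C'.edges := by
          intro e he
          refine (hmemE' _).mpr ⟨⟨e, he, rfl⟩, ?_⟩
          rw [← Finset.card_pos]
          have h1 := hScard e he
          have h2 := hC e he
          have h3 := Finset.card_sdiff_add_card_inter e S
          omega
        refine hQ x ?_ i
        obtain ⟨⟨hx0, hxs⟩, hext⟩ := hx
        have hSzero : ∀ j ∈ S, x j = 0 := by
          intro j hj
          refine hzero j ?_
          rw [hsupp', Finset.mem_sdiff]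
          rintro ⟨-, hjS⟩
          exact hjS hj
        refine ⟨⟨hx0, fun e he => ?_⟩, ?_⟩
        · calc (1:ℝ) ≤ ∑ j ∈ e \ S, x j := hxs _ (hmem e he)
            _ ≤ ∑ j ∈ e, x j := by
              rw [sum_split e S x]
              have : (0:ℝ) ≤ ∑ j ∈ e ∩ S, x j :=
                Finset.sum_nonneg fun j _ => hx0 j
              linarith
        · intro y hy z hz hseg
          obtain ⟨a, b, ha, hb, hab, habx⟩ := hseg
          have hpt : ∀ j, a * y j + b * z j = x j := by
            intro j
            have := congrFun habx j
            simpa using this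
          have hyzS : ∀ j ∈ S, y j = 0 ∧ z j = 0 := by
            intro j hj
            exact convex_zero ha hb (hy.1 j) (hz.1 j) (by rw [hpt j, hSzero j hj])
          have hmemQ' : ∀ w : Fin n → ℝ, w ∈ C.QA → (∀ j ∈ S, w j = 0) → w ∈ C'.QA := by
            intro w hw hwS
            refine ⟨hw.1, fun f hf => ?_⟩
            obtain ⟨⟨e, he, rfl⟩, -⟩ := (hmemE' f).mp hf
            have hz0 : ∑ j ∈ e ∩ S, w j = 0 :=
              Finset.sum_eq_zero fun j hj => hwS j (Finset.mem_inter.mp hj).2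
            have := sum_split e S w
            rw [hz0, add_zero] at this
            rw [← this]
            exact hw.2 e he
          have hyQ' := hmemQ' y hy (fun j hj => (hyzS j hj).1)
          have hzQ' := hmemQ' z hz (fun j hj => (hyzS j hj).2)
          exact hext hyQ' hzQ' ⟨a, b, ha, hb, hab, habx⟩
    obtain ⟨X', hdisj', hmeet', hsub', hcov'⟩ := ih C' hC'unif hQ'
    have hX'S : ∀ k, Disjoint S (X' k) := by
      intro k
      rw [Finset.disjoint_left]
      intro a haS haX
      have := hsub' k haX
      rw [hsupp', Finset.mem_sdiff] at this
      exact this.2 haS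
    refine ⟨Fin.cons S X', ?_, ?_, ?_, ?_⟩
    · intro i j hij
      induction i using Fin.cases with
      | zero =>
        induction j using Fin.cases with
        | zero => exact absurd rfl hij
        | succ j => simpa using hX'S j
      | succ i =>
        induction j using Fin.cases with
        | zero => simpa using (hX'S i).symm
        | succ j =>
          have : i ≠ j := fun h => hij (by rw [h])
          simpa using hdisj' i j this
    · intro e he i
      induction i using Fin.cases with
      | zero => simpa using hScard e he
      | succ i =>
        have hmem : e \ S ∈ C'.edges := by
          refine (hmemE' _).mpr ⟨⟨e, he, rfl⟩, ?_⟩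
          rw [← Finset.card_pos]
          have h1 := hScard e he
          have h2 := hC e he
          have h3 := Finset.card_sdiff_add_card_inter e S
          have h4 : 0 < d := i.pos
          omega
        have heq : e ∩ X' i = (e \ S) ∩ X' i := by
          ext a
          simp only [Finset.mem_inter, Finset.mem_sdiff]
          constructor
          · rintro ⟨hae, haX⟩
            exact ⟨⟨hae, fun haS => Finset.disjoint_left.mp (hX'S i) haS haX⟩, haX⟩
          · rintro ⟨⟨hae, -⟩, haX⟩
            exact ⟨hae, haX⟩
        rw [Fin.cons_succ, heq]
        exact hmeet' (e \ S) hmem i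
    · intro i
      induction i using Fin.cases with
      | zero => simpa using hSsupp
      | succ i =>
        rw [Fin.cons_succ]
        refine (hsub' i).trans ?_
        rw [hsupp']
        exact Finset.sdiff_subset
    · intro v hv
      by_cases hvS : v ∈ S
      · exact ⟨0, by simpa using hvS⟩
      · have : v ∈ supp C' := by
          rw [hsupp', Finset.mem_sdiff]
          exact ⟨hv, hvS⟩
        obtain ⟨k, hk⟩ := hcov' v this
        exact ⟨k.succ, by simpa using hk⟩

end ClutterAux

end Aux

/-- If `C` is a `d`-uniform clutter (without isolated vertices) whose set
covering polyhedron `Q(A)` is integral, then there are `d` mutually disjoint minimal vertex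
covers `X_1, …, X_d` of `C` whose union is the vertex set; in particular every edge meets
each `X_k` in exactly one vertex. -/
theorem stmt1 {n d : ℕ} (C : Clutter n) (hC : C.Uniform d)
    (hiso : ∀ i : Fin n, ∃ e ∈ C.edges, i ∈ e) (hQ : C.QAIntegral) :
    ∃ X : Fin d → Finset (Fin n),
      (∀ i j, i ≠ j → Disjoint (X i) (X j)) ∧
      (∀ i, C.IsMinCover (X i)) ∧
      (∀ v : Fin n, ∃ i, v ∈ X i) ∧
      (∀ e ∈ C.edges, ∀ i, (e ∩ X i).card = 1) := by
    classical
  obtain ⟨X, hdisj, hmeet, hsub, hcov⟩ := ClutterAux.key d C hC hQ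
  have hsupp_univ : ∀ v : Fin n, v ∈ ClutterAux.supp C :=
    fun v => ClutterAux.mem_supp.mpr (hiso v)
  refine ⟨X, hdisj, ?_, fun v => hcov v (hsupp_univ v), hmeet⟩
  intro i
  constructor
  · intro e he
    rw [← Finset.card_pos, hmeet e he i]
    norm_num
  · intro T hT hTcov
    refine Finset.Subset.antisymm hT ?_
    intro v hv
    obtain ⟨e, he, hve⟩ := hiso v
    have h1 : e ∩ X i = {v} := by
      obtain ⟨a, ha⟩ := Finset.card_eq_one.mp (hmeet e he i)
      have hv' : v ∈ e ∩ X i := Finset.mem_inter.mpr ⟨hve, hv⟩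
      rw [ha] at hv' ⊢
      rw [Finset.mem_singleton] at hv'
      rw [hv']
    obtain ⟨w, hw⟩ := hTcov e he
    have hw' : w ∈ e ∩ X i := Finset.mem_inter.mpr
      ⟨(Finset.mem_inter.mp hw).1, hT (Finset.mem_inter.mp hw).2⟩
    rw [h1, Finset.mem_singleton] at hw'
    rw [← hw']
    exact (Finset.mem_inter.mp hw).2
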